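/- Let $\mathsf{M}$ be a $d\times d$ integer dilation matrix with $d_{\mathsf{M}}=|\det\mathsf{M}|$, $\Gamma_{\mathsf{M}}=\{\gamma_1,\dots,\gamma_{d_{\mathsf{M}}}\}$ with $\gamma_1=0$, and let $a,\tilde a$ be finitely supported $\mathsf{M}$-interpolatory filters. Suppose for each $j=2,\dots,d_{\mathsf{M}}$ there are finitely supported filters $u_{j,t},\tilde u_{j,t}$ ($t=1,\dots,s_j$) with $d_{\mathsf{M}}^{-1} - d_{\mathsf{M}}\,\overline{\widehat{a^{[\gamma_j,\mathsf{M}]}}(\xi)}\,\widehat{\tilde a^{[\gamma_j,\mathsf{M}]}}(\xi) = \sum_{t=1}^{s_j} \overline{\widehat{u_{j,t}}(\xi)}\,\widehat{\tilde u_{j,t}}(\xi)$ for all $\xi$. Define $\widehat{b_1}:=\widehat{a}-1$, $\widehat{\tilde b_1}:=1-\widehat{\tilde a}$, $\widehat{b_j}(\xi):=d_{\mathsf{M}}^{-1/2}-d_{\mathsf{M}}^{1/2}e^{-i\gamma_j\cdot\xi}\widehat{a^{[\gamma_j,\mathsf{M}]}}(\mathsf{M}^{\mathsf{T}}\xi)$,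 $\widehat{\tilde b_j}(\xi):=d_{\mathsf{M}}^{-1/2}-d_{\mathsf{M}}^{1/2}e^{-i\gamma_j\cdot\xi}\widehat{\tilde a^{[\gamma_j,\mathsf{M}]}}(\mathsf{M}^{\mathsf{T}}\xi)$ for $j=2,\dots,d_{\mathsf{M}}$, and $\widehat{b_{j,t}}(\xi):=e^{-i\gamma_j\cdot\xi}\widehat{u_{j,t}}(\mathsf{M}^{\mathsf{T}}\xi)$, $\widehat{\tilde b_{j,t}}(\xi):=e^{-i\gamma_j\cdot\xi}\widehat{\tilde u_{j,t}}(\mathsf{M}^{\mathsf{T}}\xi)$. Then the collection $(\{a; b_1,\dots,b_{d_{\mathsf{M}}}, (b_{j,t})\},\{\tilde a; \tilde b_1,\dots,\tilde b_{d_{\mathsf{M}}},(\tilde b_{j,t})\})$ is a dual $\mathsf{M}$-framelet filter bank, i.e., $\overline{\widehat{a}(\xi)}\widehat{\tilde a}(\xi+2\pi\omega) + \sum \overline{\widehat{b}(\xi)}\widehat{\tilde b}(\xi+2\pi\omega) = \delta(\omega)$ for all $\xi\in\mathbb{R}^d$ and $\omega\in\Omega_{\mathsf{M}}$, where the sum runs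 over all constructed high-pass pairs. -/

import Mathlib

open scoped BigOperators Classical
open Asymptotics Filter Matrix

noncomputable section

def zr {d : ℕ} (k : Fin d → ℤ) : Fin d → ℝ := fun i => (k i : ℝ)

/-- Fourier series `û(ξ) = ∑_k u(k) e^{-i k·ξ}` of a filter on `ℤ^d`. -/
def fhat {d : ℕ} (a : (Fin d → ℤ) → ℂ) (ξ : Fin d → ℝ) : ℂ :=
  ∑' k : Fin d → ℤ, a k * Complex.exp (-Complex.I * ((∑ i, (k i : ℝ) * ξ i : ℝ) : ℂ))

/-- `d_M = |det M|`. -/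
def dm {d : ℕ} (M : Matrix (Fin d) (Fin d) ℤ) : ℕ := M.det.natAbs

/-- A dilation matrix: integer matrix whose (complex) eigenvalues all exceed 1 in modulus. -/
def IsDilation {d : ℕ} (M : Matrix (Fin d) (Fin d) ℤ) : Prop :=
  M.det ≠ 0 ∧ ∀ z : ℂ, (M.map (Int.cast : ℤ → ℂ)).charpoly.IsRoot z → 1 < ‖z‖

/-- The real matrix associated with an integer matrix. -/
def Mr {d : ℕ} (M : Matrix (Fin d) (Fin d) ℤ) : Matrix (Fin d) (Fin d) ℝ :=
  M.map (Int.cast : ℤ → ℝ)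

/-- `M`-interpolatory filter: `a(Mk) = d_M⁻¹ δ(k)`. -/
def Interp {d : ℕ} (M : Matrix (Fin d) (Fin d) ℤ) (a : (Fin d → ℤ) → ℂ) : Prop :=
  ∀ k : Fin d → ℤ, a (M.mulVec k) = ((dm M : ℂ))⁻¹ * (if k = 0 then 1 else 0)

/-- Coset filter `u^{[γ,M]}(k) = u(γ + Mk)`. -/
def coset {d : ℕ} (M : Matrix (Fin d) (Fin d) ℤ) (γ : Fin d → ℤ)
    (a : (Fin d → ℤ) → ℂ) : (Fin d → ℤ) → ℂ := fun k => a (γ + M.mulVec k)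

def ee (x : ℝ) : ℂ := Complex.exp (-Complex.I * (x:ℂ))

lemma ee_add (x y : ℝ) : ee (x + y) = ee x * ee y := by
  simp [ee, ← Complex.exp_add]; ring_nf

lemma ee_zero : ee 0 = 1 := by simp [ee]

lemma ee_mul_conj (x : ℝ) : (starRingEnd ℂ) (ee x) * ee x = 1 := by
  rw [ee, ← Complex.exp_conj, ← Complex.exp_add]
  norm_num [Complex.exp_eq_one_iff]

lemma conj_ee (x : ℝ) : (starRingEnd ℂ) (ee x) = ee (-x) := by
  rw [ee, ee, ← Complex.exp_conj]
  congr 1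
  simp

lemma ee_int (n : ℤ) : ee (2 * Real.pi * n) = 1 := by
  rw [ee, Complex.exp_eq_one_iff]
  exact ⟨-n, by push_cast; ring⟩

lemma fhat_eq {d : ℕ} (a : (Fin d → ℤ) → ℂ) (ξ : Fin d → ℝ) :
    fhat a ξ = ∑' k : Fin d → ℤ, a k * ee (∑ i, (k i : ℝ) * ξ i) := rfl

lemma summable_fhat {d : ℕ} (a : (Fin d → ℤ) → ℂ) (ha : (Function.support a).Finite)
    (ξ : Fin d → ℝ) : Summable (fun k : Fin d → ℤ => a k * ee (∑ i, (k i : ℝ) * ξ i)) := by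
  apply summable_of_ne_finset_zero (s := ha.toFinset)
  intro k hk
  have : a k = 0 := by
    by_contra h; exact hk (ha.mem_toFinset.mpr h)
  simp [this]

lemma fhat_periodic {d : ℕ} (a : (Fin d → ℤ) → ℂ) (ξ : Fin d → ℝ) (m : Fin d → ℤ) :
    fhat a (ξ + (2 * Real.pi) • zr m) = fhat a ξ := by
  rw [fhat_eq, fhat_eq]
  apply tsum_congr
  intro k
  congr 1
  have h1 : (∑ i, (k i : ℝ) * (ξ + (2 * Real.pi) • zr m) i)
      = (∑ i, (k i : ℝ) * ξ i) + 2 * Real.pi * ((∑ i, k i * m i : ℤ) : ℝ) := by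
    simp only [Pi.add_apply, Pi.smul_apply, smul_eq_mul, zr]
    push_cast
    rw [Finset.mul_sum, ← Finset.sum_add_distrib]
    apply Finset.sum_congr rfl; intros; ring
  rw [h1, ee_add, ee_int, mul_one]

lemma mulVec_int_injective {d : ℕ} (M : Matrix (Fin d) (Fin d) ℤ) (hdet : M.det ≠ 0) :
    Function.Injective (M.mulVec : (Fin d → ℤ) → (Fin d → ℤ)) := by
  intro x y hxy
  set f := Int.castRingHom ℚ with hf
  have h : (M.map f).mulVec (f ∘ x) = (M.map f).mulVec (f ∘ y) := by
    ext i
    rw [← RingHom.map_mulVec f, ← RingHom.map_mulVec f, hxy]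
  have hu : IsUnit (M.map f) := by
    rw [Matrix.isUnit_iff_isUnit_det, ← RingHom.mapMatrix_apply, ← f.map_det]
    simp only [isUnit_iff_ne_zero, ne_eq, hf, eq_intCast, Int.cast_eq_zero]
    exact hdet
  have h2 := Matrix.mulVec_injective_iff_isUnit.mpr hu h
  funext i
  have h3 := congrFun h2 i
  simpa using h3

lemma dot_split {d : ℕ} (M : Matrix (Fin d) (Fin d) ℤ) (γ n : Fin d → ℤ) (ξ : Fin d → ℝ) :
    (∑ i, ((γ + M.mulVec n) i : ℝ) * ξ i)
      = (∑ i, (γ i : ℝ) * ξ i) + ∑ j, (n j : ℝ) * ((Mr M)ᵀ.mulVec ξ) j := by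
  have hL : (∑ i, ((γ + M.mulVec n) i : ℝ) * ξ i)
      = (∑ i, (γ i : ℝ) * ξ i) + ∑ i, ∑ j, (M i j : ℝ) * (n j : ℝ) * ξ i := by
    rw [← Finset.sum_add_distrib]
    apply Finset.sum_congr rfl
    intro i _
    simp only [Pi.add_apply, Matrix.mulVec, dotProduct]
    push_cast
    rw [add_mul, Finset.sum_mul]
  have hR : (∑ j, (n j : ℝ) * ((Mr M)ᵀ.mulVec ξ) j)
      = ∑ j, ∑ i, (M i j : ℝ) * (n j : ℝ) * ξ i := by
    apply Finset.sum_congr rfl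
    intro j _
    simp only [Matrix.mulVec, dotProduct, Mr, Matrix.transpose_apply, Matrix.map_apply]
    rw [Finset.mul_sum]
    apply Finset.sum_congr rfl
    intro i _; ring
  rw [hL, hR, Finset.sum_comm]

/-- Fourier series of the high-pass filter
`b̂_j(ξ) = d_M^{-1/2} - d_M^{1/2} e^{-iγ_j·ξ} â^{[γ_j,M]}(Mᵀξ)`. -/
def hpB {d N : ℕ} (M : Matrix (Fin d) (Fin d) ℤ) (γ : Fin N → (Fin d → ℤ))
    (a : (Fin d → ℤ) → ℂ) (j : Fin N) (ξ : Fin d → ℝ) : ℂ :=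
  ((Real.sqrt (dm M) : ℝ) : ℂ)⁻¹ - ((Real.sqrt (dm M) : ℝ) : ℂ) *
    (Complex.exp (-Complex.I * ((∑ i, (γ j i : ℝ) * ξ i : ℝ) : ℂ)) *
      fhat (coset M (γ j) a) ((Mr M)ᵀ.mulVec ξ))

/-- Fourier series of the high-pass filter `b̂_{j,t}(ξ) = e^{-iγ_j·ξ} û_{j,t}(Mᵀξ)`. -/
def hpU {d N : ℕ} (M : Matrix (Fin d) (Fin d) ℤ) (γ : Fin N → (Fin d → ℤ))
    (u : (Fin d → ℤ) → ℂ) (j : Fin N) (ξ : Fin d → ℝ) : ℂ :=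
  Complex.exp (-Complex.I * ((∑ i, (γ j i : ℝ) * ξ i : ℝ) : ℂ)) *
    fhat u ((Mr M)ᵀ.mulVec ξ)


lemma fhat_coset_zero {d : ℕ} (M : Matrix (Fin d) (Fin d) ℤ) (a : (Fin d → ℤ) → ℂ)
    (hint : Interp M a) (η : Fin d → ℝ) :
    fhat (coset M 0 a) η = ((dm M : ℂ))⁻¹ := by
  have h0 := hint 0
  rw [Matrix.mulVec_zero] at h0
  rw [fhat_eq, tsum_eq_single 0]
  · simp [coset, ee_zero, h0]
  · intro k hk
    have h : coset M 0 a k = 0 := by simp [coset, hint k, hk]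
    simp [h]

lemma fhat_coset_split {d N : ℕ} (M : Matrix (Fin d) (Fin d) ℤ) (hdet : M.det ≠ 0)
    (γ : Fin N → (Fin d → ℤ))
    (hγ : ∀ k : Fin d → ℤ, ∃! j : Fin N, ∃ n : Fin d → ℤ, k = γ j + M.mulVec n)
    (a : (Fin d → ℤ) → ℂ) (ha : (Function.support a).Finite) (ξ : Fin d → ℝ) :
    fhat a ξ = ∑ j : Fin N, ee (∑ i, (γ j i : ℝ) * ξ i) *
      fhat (coset M (γ j) a) ((Mr M)ᵀ.mulVec ξ) := by
  set f : (Fin d → ℤ) → ℂ := fun k => a k * ee (∑ i, (k i : ℝ) * ξ i) with hfdef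
  have hsum : Summable f := summable_fhat a ha ξ
  have hbij : Function.Bijective (fun p : Fin N × (Fin d → ℤ) => γ p.1 + M.mulVec p.2) := by
    constructor
    · rintro ⟨j, n⟩ ⟨j', n'⟩ hp
      simp only at hp
      obtain ⟨j₀, hj₀, huniq⟩ := hγ (γ j + M.mulVec n)
      have h1 : j = j₀ := huniq j ⟨n, rfl⟩
      have h2 : j' = j₀ := huniq j' ⟨n', hp⟩
      have hj : j = j' := h1.trans h2.symm
      subst hj
      have : M.mulVec n = M.mulVec n' := add_left_cancel hp
      have hn := mulVec_int_injective M hdet this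
      simp [hn]
    · intro k
      obtain ⟨j, ⟨n, hn⟩, _⟩ := hγ k
      exact ⟨(j, n), hn.symm⟩
  set e := Equiv.ofBijective _ hbij with he
  have h1 : fhat a ξ = ∑' k, f k := fhat_eq a ξ
  have h2 : ∑' k, f k = ∑' p : Fin N × (Fin d → ℤ), f (e p) := (e.tsum_eq f).symm
  have hce : Summable (f ∘ e) := e.summable_iff.mpr hsum
  have hfib : ∀ b : Fin N, Summable (fun c : Fin d → ℤ => (f ∘ e) (b, c)) := by
    intro b
    have hinj : Function.Injective (fun c : Fin d → ℤ => e (b, c)) := by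
      intro x y h
      have := e.injective h
      exact congrArg Prod.snd this
    exact hsum.comp_injective hinj
  have h3 : ∑' p : Fin N × (Fin d → ℤ), f (e p)
      = ∑' j : Fin N, ∑' n : Fin d → ℤ, f (γ j + M.mulVec n) := by
    have := Summable.tsum_prod' hce hfib
    simpa [he, Function.comp] using this
  rw [h1, h2, h3, tsum_fintype]
  apply Finset.sum_congr rfl
  intro j _
  rw [fhat_eq, ← tsum_mul_left]
  apply tsum_congr
  intro n
  simp only [hfdef, coset]
  rw [dot_split M (γ j) n ξ, ee_add]
  ring

lemma ee_dot_coset {d : ℕ} (M : Matrix (Fin d) (Fin d) ℤ) (k n : Fin d → ℤ)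
    (ω : Fin d → ℝ) (m : Fin d → ℤ) (hm : (Mr M)ᵀ.mulVec ω = zr m) :
    ee (2 * Real.pi * ∑ i, ((k + M.mulVec n) i : ℝ) * ω i)
      = ee (2 * Real.pi * ∑ i, (k i : ℝ) * ω i) := by
  rw [dot_split M k n ω, hm]
  have h2 : (∑ j, (n j : ℝ) * zr m j) = ((∑ j, n j * m j : ℤ) : ℝ) := by
    push_cast [zr]; rfl
  rw [mul_add, ee_add, h2, ee_int, mul_one]

lemma char_sum {d N : ℕ} (M : Matrix (Fin d) (Fin d) ℤ) (hdet : M.det ≠ 0)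
    (γ : Fin N → (Fin d → ℤ))
    (hγ : ∀ k : Fin d → ℤ, ∃! j : Fin N, ∃ n : Fin d → ℤ, k = γ j + M.mulVec n)
    (ω : Fin d → ℝ) (m : Fin d → ℤ) (hm : (Mr M)ᵀ.mulVec ω = zr m)
    (hnint : ¬ ∃ n : Fin d → ℤ, ω = zr n) :
    ∑ j : Fin N, ee (2 * Real.pi * ∑ i, (γ j i : ℝ) * ω i) = 0 := by
  -- find a coordinate where ω is not an integer
  have hex : ∃ i₀ : Fin d, ∀ z : ℤ, ω i₀ ≠ (z : ℝ) := by
    by_contra h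
    push_neg at h
    choose n hn using h
    exact hnint ⟨n, funext hn⟩
  obtain ⟨i₀, hi₀⟩ := hex
  set k₀ : Fin d → ℤ := fun i => if i = i₀ then 1 else 0 with hk₀
  have hdot : ∀ k : Fin d → ℤ, (∑ i, ((k + k₀) i : ℝ) * ω i)
      = (∑ i, (k i : ℝ) * ω i) + ω i₀ := by
    intro k
    simp only [Pi.add_apply, hk₀]
    push_cast
    have h1 : ∀ i : Fin d, ((k i : ℝ) + if i = i₀ then 1 else 0) * ω i
        = (k i : ℝ) * ω i + (if i = i₀ then ω i else 0) := by
      intro i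
      by_cases h : i = i₀ <;> simp [h] <;> ring
    simp_rw [h1]
    rw [Finset.sum_add_distrib, Finset.sum_ite_eq' Finset.univ i₀ ω]
    simp
  set c : ℂ := ee (2 * Real.pi * ω i₀) with hc
  have hc1 : c ≠ 1 := by
    intro h
    rw [hc, ee, Complex.exp_eq_one_iff] at h
    obtain ⟨z, hz⟩ := h
    have him := congrArg Complex.im hz
    simp [Complex.mul_im, Complex.mul_re] at him
    have h2 : 2 * Real.pi * (ω i₀ + z) = 0 := by linear_combination -him
    rcases mul_eq_zero.mp h2 with h3 | h3
    · exact absurd h3 (by positivity)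
    · exact hi₀ (-z) (by push_cast; linarith)
  -- the permutation induced by adding k₀
  have hσex : ∀ j : Fin N, ∃ j' : Fin N, ∃ n : Fin d → ℤ, γ j + k₀ = γ j' + M.mulVec n := by
    intro j
    obtain ⟨j', hj', _⟩ := hγ (γ j + k₀)
    exact ⟨j', hj'⟩
  choose σ nσ hσ using hσex
  have hσinj : Function.Injective σ := by
    intro j j' h
    have e1 := hσ j
    have e2 := hσ j'
    rw [h] at e1
    have hsub : γ j - γ j' = M.mulVec (nσ j) - M.mulVec (nσ j') := by
      have h3 : (γ j + k₀) - (γ j' + k₀)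
          = (γ (σ j') + M.mulVec (nσ j)) - (γ (σ j') + M.mulVec (nσ j')) := by
        rw [e1, e2]
      have h4 : γ j - γ j' = (γ j + k₀) - (γ j' + k₀) := by abel
      have h5 : (γ (σ j') + M.mulVec (nσ j)) - (γ (σ j') + M.mulVec (nσ j'))
          = M.mulVec (nσ j) - M.mulVec (nσ j') := by abel
      rw [h4, h3, h5]
    have hthis : γ j = γ j' + M.mulVec (nσ j - nσ j') := by
      rw [Matrix.mulVec_sub]
      have := sub_eq_iff_eq_add.mp hsub
      rw [this]; abel
    obtain ⟨j₀, hj₀, huniq⟩ := hγ (γ j)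
    have ha1 : j = j₀ := huniq j ⟨0, by simp⟩
    have ha2 : j' = j₀ := huniq j' ⟨nσ j - nσ j', hthis⟩
    exact ha1.trans ha2.symm
  have hσbij : Function.Bijective σ := (Finite.injective_iff_bijective).mp hσinj
  set χ : Fin N → ℂ := fun j => ee (2 * Real.pi * ∑ i, (γ j i : ℝ) * ω i) with hχ
  have key : ∀ j : Fin N, χ (σ j) = c * χ j := by
    intro j
    have h1 : χ (σ j) = ee (2 * Real.pi * ∑ i, ((γ j + k₀) i : ℝ) * ω i) := by
      rw [hχ]
      have := hσ j
      rw [this]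
      exact (ee_dot_coset M (γ (σ j)) (nσ j) ω m hm).symm
    rw [h1, hdot (γ j), mul_add, ee_add, hχ]
    ring
  have hsum : ∑ j, χ (σ j) = ∑ j, χ j := Function.Bijective.sum_comp hσbij χ
  have hcs : c * ∑ j, χ j = ∑ j, χ j := by
    conv_rhs => rw [← hsum]
    rw [Finset.mul_sum]
    exact Finset.sum_congr rfl (fun j _ => (key j).symm)
  have h5 : (c - 1) * ∑ j, χ j = 0 := by linear_combination hcs
  rcases mul_eq_zero.mp h5 with h | h
  · exact absurd (sub_eq_zero.mp h) hc1
  · exact h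

/-- the constructed high-pass filters form a dual `M`-framelet filter
bank with the interpolatory low-pass pair `(a, ã)`. -/
theorem stmt13 {d : ℕ} (M : Matrix (Fin d) (Fin d) ℤ) (hM : IsDilation M)
    (N : ℕ) (hN : N = dm M) (hpos : 0 < N)
    (γ : Fin N → (Fin d → ℤ)) (ω : Fin N → (Fin d → ℝ))
    (hγ1 : γ ⟨0, hpos⟩ = 0) (hω1 : ω ⟨0, hpos⟩ = 0)
    (hγ : ∀ k : Fin d → ℤ, ∃! j : Fin N, ∃ n : Fin d → ℤ, k = γ j + M.mulVec n)
    (hωmem : ∀ j : Fin N, ∃ k : Fin d → ℤ, (Mr M)ᵀ.mulVec (ω j) = zr k)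
    (hω : ∀ x : Fin d → ℝ, (∃ k : Fin d → ℤ, (Mr M)ᵀ.mulVec x = zr k) →
      ∃! j : Fin N, ∃ n : Fin d → ℤ, x - ω j = zr n)
    (a ta : (Fin d → ℤ) → ℂ)
    (ha : (Function.support a).Finite) (hta : (Function.support ta).Finite)
    (hinta : Interp M a) (hintta : Interp M ta)
    (s : Fin N → ℕ) (u tu : (j : Fin N) → Fin (s j) → ((Fin d → ℤ) → ℂ))
    (hufin : ∀ j t, (Function.support (u j t)).Finite)
    (htufin : ∀ j t, (Function.support (tu j t)).Finite)
    (hfac : ∀ j : Fin N, j ≠ ⟨0, hpos⟩ → ∀ ξ : Fin d → ℝ,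
      ((dm M : ℂ))⁻¹ - (dm M : ℂ) *
          ((starRingEnd ℂ) (fhat (coset M (γ j) a) ξ) * fhat (coset M (γ j) ta) ξ)
        = ∑ t : Fin (s j), (starRingEnd ℂ) (fhat (u j t) ξ) * fhat (tu j t) ξ) :
    ∀ (ξ : Fin d → ℝ) (l : Fin N),
      (starRingEnd ℂ) (fhat a ξ) * fhat ta (ξ + (2 * Real.pi) • ω l)
        + (starRingEnd ℂ) (fhat a ξ - 1) * (1 - fhat ta (ξ + (2 * Real.pi) • ω l))
        + ∑ j ∈ Finset.univ.erase ⟨0, hpos⟩,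
            (starRingEnd ℂ) (hpB M γ a j ξ) * hpB M γ ta j (ξ + (2 * Real.pi) • ω l)
        + ∑ j ∈ Finset.univ.erase ⟨0, hpos⟩, ∑ t : Fin (s j),
            (starRingEnd ℂ) (hpU M γ (u j t) j ξ) *
              hpU M γ (tu j t) j (ξ + (2 * Real.pi) • ω l)
        = if ω l = 0 then 1 else 0 := by
  intro ξ l
  have hdet := hM.1
  obtain ⟨m, hm⟩ := hωmem l
  set j₀ : Fin N := ⟨0, hpos⟩ with hj₀def
  set ξ' : Fin d → ℝ := ξ + (2 * Real.pi) • ω l with hξ'def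
  have hdmpos : 0 < dm M := by
    rw [dm]
    exact Int.natAbs_pos.mpr hdet
  have hdm0 : (dm M : ℂ) ≠ 0 := by
    exact_mod_cast Nat.cast_ne_zero.mpr hdmpos.ne'
  set D : ℂ := (dm M : ℂ) with hD
  set Di : ℂ := ((dm M : ℂ))⁻¹ with hDi
  set sq : ℂ := ((Real.sqrt (dm M) : ℝ) : ℂ) with hsqdef
  have hsq2 : sq * sq = D := by
    rw [hsqdef, ← Complex.ofReal_mul, Real.mul_self_sqrt (Nat.cast_nonneg _), hD]
    push_cast
    rfl
  have hsqne : sq ≠ 0 := by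
    rw [hsqdef]
    simp only [ne_eq, Complex.ofReal_eq_zero]
    positivity
  have hconj_sq : (starRingEnd ℂ) sq = sq := Complex.conj_ofReal _
  set E : Fin N → ℂ := fun j => ee (∑ i, (γ j i : ℝ) * ξ i) with hE
  set ε : Fin N → ℂ := fun j => ee (2 * Real.pi * ∑ i, (γ j i : ℝ) * ω l i) with hε
  set Pa : Fin N → ℂ := fun j => fhat (coset M (γ j) a) ((Mr M)ᵀ.mulVec ξ) with hPa
  set Pta : Fin N → ℂ := fun j => fhat (coset M (γ j) ta) ((Mr M)ᵀ.mulVec ξ) with hPta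
  have hMξ' : (Mr M)ᵀ.mulVec ξ' = (Mr M)ᵀ.mulVec ξ + (2 * Real.pi) • zr m := by
    rw [hξ'def, Matrix.mulVec_add, Matrix.mulVec_smul, hm]
  have hper : ∀ b : (Fin d → ℤ) → ℂ,
      fhat b ((Mr M)ᵀ.mulVec ξ') = fhat b ((Mr M)ᵀ.mulVec ξ) := by
    intro b
    rw [hMξ']
    exact fhat_periodic b _ m
  have hEε : ∀ j, ee (∑ i, (γ j i : ℝ) * ξ' i) = E j * ε j := by
    intro j
    rw [hE, hε, ← ee_add]
    congr 1
    simp only [hξ'def, Pi.add_apply, Pi.smul_apply, smul_eq_mul]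
    rw [Finset.mul_sum, ← Finset.sum_add_distrib]
    exact Finset.sum_congr rfl fun i _ => by ring
  have hEc : ∀ j, (starRingEnd ℂ) (E j) * E j = 1 := fun j => ee_mul_conj _
  have hsplitA : fhat a ξ = ∑ j, E j * Pa j := fhat_coset_split M hdet γ hγ a ha ξ
  have hsplitT : fhat ta ξ' = ∑ j, (E j * ε j) * Pta j := by
    rw [fhat_coset_split M hdet γ hγ ta hta ξ']
    exact Finset.sum_congr rfl fun j _ => by rw [hEε j, hper]
  have hconjA : (starRingEnd ℂ) (fhat a ξ)
      = ∑ j, (starRingEnd ℂ) (E j) * (starRingEnd ℂ) (Pa j) := by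
    rw [hsplitA, map_sum]
    exact Finset.sum_congr rfl fun j _ => _root_.map_mul _ _ _
  have hE0 : E j₀ = 1 := by rw [hE]; simp [hγ1, ee_zero]
  have hε0 : ε j₀ = 1 := by rw [hε]; simp [hγ1, ee_zero]
  have hPa0 : Pa j₀ = Di := by
    rw [hPa]
    simp only [hγ1]
    exact fhat_coset_zero M a hinta _
  have hPta0 : Pta j₀ = Di := by
    rw [hPta]
    simp only [hγ1]
    exact fhat_coset_zero M ta hintta _
  have hBa : ∀ j, hpB M γ a j ξ = sq⁻¹ - sq * (E j * Pa j) := fun j => rfl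
  have hBta : ∀ j, hpB M γ ta j ξ' = sq⁻¹ - sq * ((E j * ε j) * Pta j) := by
    intro j
    show sq⁻¹ - sq * (ee (∑ i, (γ j i : ℝ) * ξ' i)
        * fhat (coset M (γ j) ta) ((Mr M)ᵀ.mulVec ξ')) = _
    rw [hEε j, hper]
  have hBj : ∀ j, (starRingEnd ℂ) (hpB M γ a j ξ) * hpB M γ ta j ξ'
      = Di - (E j * ε j) * Pta j - (starRingEnd ℂ) (E j) * (starRingEnd ℂ) (Pa j)
        + D * (ε j * ((starRingEnd ℂ) (Pa j) * Pta j)) := by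
    intro j
    rw [hBa j, hBta j, map_sub, _root_.map_mul, map_inv₀, hconj_sq, _root_.map_mul]
    have hsqi : sq⁻¹ * sq = 1 := inv_mul_cancel₀ hsqne
    have hsqii : sq⁻¹ * sq⁻¹ = Di := by rw [← mul_inv, hsq2, hDi, hD]
    linear_combination hsqii
      + (-(E j * ε j * Pta j) - (starRingEnd ℂ) (E j) * (starRingEnd ℂ) (Pa j)) * hsqi
      + ((starRingEnd ℂ) (E j) * E j * ε j * (starRingEnd ℂ) (Pa j) * Pta j) * hsq2
      + (D * ε j * (starRingEnd ℂ) (Pa j) * Pta j) * hEc j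
  have hUj : ∀ j, j ≠ j₀ →
      (∑ t : Fin (s j), (starRingEnd ℂ) (hpU M γ (u j t) j ξ) * hpU M γ (tu j t) j ξ')
        = ε j * (Di - D * ((starRingEnd ℂ) (Pa j) * Pta j)) := by
    intro j hj
    have h1 : ∀ t, (starRingEnd ℂ) (hpU M γ (u j t) j ξ) * hpU M γ (tu j t) j ξ'
        = ε j * ((starRingEnd ℂ) (fhat (u j t) ((Mr M)ᵀ.mulVec ξ))
            * fhat (tu j t) ((Mr M)ᵀ.mulVec ξ)) := by
      intro t
      show (starRingEnd ℂ) (ee (∑ i, (γ j i : ℝ) * ξ i) * fhat (u j t) ((Mr M)ᵀ.mulVec ξ))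
          * (ee (∑ i, (γ j i : ℝ) * ξ' i) * fhat (tu j t) ((Mr M)ᵀ.mulVec ξ')) = _
      rw [hEε j, hper, _root_.map_mul]
      linear_combination (ε j * (starRingEnd ℂ) (fhat (u j t) ((Mr M)ᵀ.mulVec ξ))
        * fhat (tu j t) ((Mr M)ᵀ.mulVec ξ)) * hEc j
    rw [Finset.sum_congr rfl (fun t _ => h1 t), ← Finset.mul_sum,
      ← hfac j hj ((Mr M)ᵀ.mulVec ξ)]
  -- combine the two high-pass sums
  set g : Fin N → ℂ := fun j => Di + ε j * Di - (E j * ε j) * Pta j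
      - (starRingEnd ℂ) (E j) * (starRingEnd ℂ) (Pa j) with hg
  have hsum34 : (∑ j ∈ Finset.univ.erase j₀,
        (starRingEnd ℂ) (hpB M γ a j ξ) * hpB M γ ta j ξ')
      + (∑ j ∈ Finset.univ.erase j₀, ∑ t : Fin (s j),
          (starRingEnd ℂ) (hpU M γ (u j t) j ξ) * hpU M γ (tu j t) j ξ')
      = ∑ j ∈ Finset.univ.erase j₀, g j := by
    rw [← Finset.sum_add_distrib]
    refine Finset.sum_congr rfl fun j hj => ?_
    rw [hBj j, hUj j (Finset.ne_of_mem_erase hj), hg]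
    ring
  have hcDi : (starRingEnd ℂ) Di = Di := by simp [hDi]
  have hg0 : g j₀ = 0 := by
    simp only [hg, hE0, hε0, hPa0, hPta0, _root_.map_one, hcDi, one_mul]
    ring
  have herase : ∑ j ∈ Finset.univ.erase j₀, g j = (∑ j, g j) - g j₀ :=
    Finset.sum_erase_eq_sub (Finset.mem_univ j₀)
  have hgsum : ∑ j, g j = (N : ℂ) * Di + (∑ j, ε j) * Di - fhat ta ξ'
      - (starRingEnd ℂ) (fhat a ξ) := by
    rw [hsplitT, hconjA, hg]
    simp only [Finset.sum_sub_distrib, Finset.sum_add_distrib, Finset.sum_const,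
      Finset.card_univ, Fintype.card_fin, nsmul_eq_mul, Finset.sum_mul]
  have hNDi : (N : ℂ) * Di = 1 := by
    rw [hN, hDi]
    exact mul_inv_cancel₀ hdm0
  have hmain : (starRingEnd ℂ) (fhat a ξ) * fhat ta ξ'
      + (starRingEnd ℂ) (fhat a ξ - 1) * (1 - fhat ta ξ')
      + (∑ j ∈ Finset.univ.erase j₀,
          (starRingEnd ℂ) (hpB M γ a j ξ) * hpB M γ ta j ξ')
      + (∑ j ∈ Finset.univ.erase j₀, ∑ t : Fin (s j),
          (starRingEnd ℂ) (hpU M γ (u j t) j ξ) * hpU M γ (tu j t) j ξ')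
      = Di * ∑ j, ε j := by
    rw [add_assoc, hsum34, herase, hg0, hgsum, map_sub, _root_.map_one]
    linear_combination hNDi
  rw [hmain]
  by_cases hωl : ω l = 0
  · have hεone : ∀ j, ε j = 1 := by
      intro j
      rw [hε, hωl]
      simp [ee_zero]
    simp only [hεone, Finset.sum_const, Finset.card_univ, Fintype.card_fin, nsmul_eq_mul,
      mul_one, hωl, if_pos]
    rw [mul_comm]
    exact hNDi
  · have hnint : ¬ ∃ n : Fin d → ℤ, ω l = zr n := by
      rintro ⟨n, hn⟩
      obtain ⟨j₁, hj₁, huniq⟩ := hω 0 ⟨0, by rw [Matrix.mulVec_zero]; funext i; simp [zr]⟩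
      have e1 : j₀ = j₁ := huniq j₀ ⟨0, by rw [hω1]; funext i; simp [zr]⟩
      have e2 : l = j₁ := huniq l ⟨-n, by rw [hn]; funext i; simp [zr]⟩
      exact hωl (by rw [e2, ← e1, hω1])
    have hzero : ∑ j, ε j = 0 := by
      rw [hε]
      exact char_sum M hdet γ hγ (ω l) m hm hnint
    rw [hzero, if_neg hωl, mul_zero]
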